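/- Lemma 1. Let F(x, y_0, y_1, …, y_n) be holomorphic in a neighborhood of 0 ∈ ℂ^{n+2}, let φ ∈ 𝒢 be a generalized power series, and let Δ be one of the operators δ, σ, μ. Then the formal substitution F(x, φ, Δφ, …, Δ^n φ) is a well-defined generalized power series, i.e. an element of 𝒢: for every N > 0, only finitely many exponents occurring in the substituted series have real part less than N. -/
import Mathlib


open Filter

open scoped Classical

noncomputable section

/-- The coefficient function of a (raw) generalized power series `f = Σ_λ f(λ) x^λ`. -/
abbrev RawGS := ℂ → ℂ

/-- `f` is a generalized power series (an element of the algebra `𝒢`): all exponents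
carrying a nonzero coefficient have positive real part, and for every `N` only finitely
many of them have real part `< N` (hence the real parts tend to `+∞`). -/
def IsGen (f : RawGS) : Prop :=
  (∀ lam : ℂ, f lam ≠ 0 → 0 < lam.re) ∧
  ∀ N : ℝ, {lam : ℂ | f lam ≠ 0 ∧ lam.re < N}.Finite

/-- The series `1 = x^0`. -/
def gsOne : RawGS := fun lam => if lam = 0 then 1 else 0

/-- Cauchy product of two generalized power series (coefficient functions). -/
def gsMul (f g : RawGS) : RawGS := fun nu =>
  ∑ᶠ p : ℂ × ℂ, if p.1 + p.2 = nu then f p.1 * g p.2 else 0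

/-- Powers of a generalized power series. -/
def gsPow (f : RawGS) : ℕ → RawGS
  | 0 => gsOne
  | k + 1 => gsMul f (gsPow f k)

/-- Product of a finite list of generalized power series. -/
def gsProdList : List RawGS → RawGS
  | [] => gsOne
  | f :: t => gsMul f (gsProdList t)

/-- Formal substitution `F(x, Φ 0, …, Φ n)`, where `A k p` is the Taylor coefficient of
`x^k · y₀^{p₀} ⋯ yₙ^{pₙ}` of `F(x, y₀, …, yₙ)`: the coefficient of `x^ν` is
`Σ_{k,p} A k p · (coefficient of x^{ν - k} in Φ₀^{p₀} ⋯ Φₙ^{pₙ})`. -/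
def gsSubst {n : ℕ} (A : ℕ → (Fin (n + 1) →₀ ℕ) → ℂ) (Φ : Fin (n + 1) → RawGS) : RawGS :=
  fun nu => ∑ᶠ (k : ℕ) (p : Fin (n + 1) →₀ ℕ),
    A k p * gsProdList (List.ofFn fun j => gsPow (Φ j) (p j)) (nu - (k : ℂ))

/-- Taylor coefficients of the partial derivative `∂F/∂y_j`. -/
def pderivCoeff {n : ℕ} (A : ℕ → (Fin (n + 1) →₀ ℕ) → ℂ) (j : Fin (n + 1)) :
    ℕ → (Fin (n + 1) →₀ ℕ) → ℂ :=
  fun k p => ((p j + 1 : ℕ) : ℂ) * A k (p + Finsupp.single j 1)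

/-- The Taylor series `A` of `F` has a nonzero (poly)radius of convergence, i.e. `F` is
holomorphic in a neighborhood of the origin of `ℂ^{n+2}`. -/
def MvRadiusPos {n : ℕ} (A : ℕ → (Fin (n + 1) →₀ ℕ) → ℂ) : Prop :=
  ∃ r : ℝ, 0 < r ∧ ∃ C : ℝ, ∀ (k : ℕ) (p : Fin (n + 1) →₀ ℕ),
    ‖A k p‖ * r ^ (k + p.sum fun _ e => e) ≤ C

/-- The operator `δ = x d/dx` on generalized power series. -/
def gsDelta : RawGS → RawGS := fun f lam => lam * f lam

/-- The operator `σ : y(x) ↦ y(qx)` on generalized power series, where `q = exp lnq`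
for a fixed branch `lnq` of `ln q`:  `σ(Σ c_λ x^λ) = Σ c_λ q^λ x^λ`. -/
def gsSigma (lnq : ℂ) : RawGS → RawGS := fun f lam => Complex.exp (lam * lnq) * f lam

/-- The Mahler operator `μ : y(x) ↦ y(x^ℓ)` on generalized power series:
`μ(Σ c_λ x^λ) = Σ c_λ x^{ℓλ}`. -/
def gsMu (l : ℕ) : RawGS → RawGS := fun f lam => f (lam / (l : ℂ))

/-- `f = a·x^ν + o(x^ν)`: the coefficient of `x^ν` is `a` and every other exponent with a
nonzero coefficient has real part `> Re ν`. -/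
def LeadingTerm (f : RawGS) (a nu : ℂ) : Prop :=
  f nu = a ∧ ∀ lam : ℂ, f lam ≠ 0 → lam = nu ∨ nu.re < lam.re

/-- Membership in the additive semigroup generated by `ρ 0, …, ρ (τ-1)`. -/
def InSemigroup {τ : ℕ} (ρ : Fin τ → ℂ) (lam : ℂ) : Prop :=
  ∃ m : Fin τ → ℕ, m ≠ 0 ∧ lam = ∑ i, (m i : ℂ) * ρ i

/-- The complex numbers `ρ 0, …, ρ (τ-1)` are linearly independent over `ℤ`. -/
def ZLinIndep {τ : ℕ} (ρ : Fin τ → ℂ) : Prop :=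
  ∀ m : Fin τ → ℤ, (∑ i, (m i : ℂ) * ρ i) = 0 → m = 0

/-- The sector `{x = t e^{iθ} : 0 < t < r, α < θ < β}` with vertex at `0`, parametrized
by `(t, θ)` (which also fixes the branch of `log x = log t + iθ` on the sector). -/
def Sector (r alpha beta : ℝ) : Set (ℝ × ℝ) :=
  {p | 0 < p.1 ∧ p.1 < r ∧ alpha < p.2 ∧ p.2 < beta}

/-- The single term `f(λ)·x^λ = f(λ)·e^{λ(log t + iθ)}` of the series at the point
`x = t e^{iθ}` of a sector. -/
def gsTermFun (f : RawGS) (lam : ℂ) (p : ℝ × ℝ) : ℂ :=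
  f lam * Complex.exp (lam * ((Real.log p.1 : ℂ) + (p.2 : ℂ) * Complex.I))

/-- The generalized power series `f` converges uniformly on every sector with vertex at
`0` of sufficiently small radius and opening less than `2π`. -/
def ConvergesOnSectors (f : RawGS) : Prop :=
  ∀ alpha beta : ℝ, alpha < beta → beta - alpha < 2 * Real.pi →
    ∃ r : ℝ, 0 < r ∧ ∃ g : ℝ × ℝ → ℂ,
      TendstoUniformlyOn (fun (s : Finset ℂ) p => ∑ lam ∈ s, gsTermFun f lam p) g
        atTop (Sector r alpha beta)

/-- Auxiliary predicate: all exponents have real part `≥ c`, with local finiteness. -/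
def GoodGE (c : ℝ) (f : RawGS) : Prop :=
  (∀ lam : ℂ, f lam ≠ 0 → c ≤ lam.re) ∧
  ∀ N : ℝ, {lam : ℂ | f lam ≠ 0 ∧ lam.re < N}.Finite

lemma finsum_ne_zero_imp {α : Type*} {f : α → ℂ} (h : (∑ᶠ a, f a) ≠ 0) : ∃ a, f a ≠ 0 := by
  by_contra hc
  push_neg at hc
  exact h (finsum_eq_zero_of_forall_eq_zero (f := f) hc)

lemma gsMul_ne_zero_imp {f g : RawGS} {nu : ℂ} (h : gsMul f g nu ≠ 0) :
    ∃ l m : ℂ, f l ≠ 0 ∧ g m ≠ 0 ∧ l + m = nu := by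
  obtain ⟨⟨l, m⟩, hlm⟩ := finsum_ne_zero_imp h
  by_cases he : l + m = nu
  · rw [if_pos he] at hlm
    exact ⟨l, m, fun h0 => hlm (by simp [h0]), fun h0 => hlm (by simp [h0]), he⟩
  · rw [if_neg he] at hlm
    exact absurd rfl hlm

lemma goodGE_mono {a b : ℝ} {f : RawGS} (h : GoodGE a f) (hba : b ≤ a) : GoodGE b f :=
  ⟨fun lam hl => hba.trans (h.1 lam hl), h.2⟩

lemma goodGE_one : GoodGE 0 gsOne := by
  constructor
  · intro lam hl
    have : lam = 0 := by
      by_contra h0; exact hl (by simp [gsOne, h0])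
    simp [this]
  · intro N
    apply Set.Finite.subset (Set.finite_singleton (0 : ℂ))
    intro lam hlm
    have : lam = 0 := by
      by_contra h0; exact hlm.1 (by simp [gsOne, h0])
    simp [this]

lemma goodGE_mul {a b : ℝ} {f g : RawGS} (hf : GoodGE a f) (hg : GoodGE b g) :
    GoodGE (a + b) (gsMul f g) := by
  constructor
  · intro nu hnu
    obtain ⟨l, m, hl, hm, he⟩ := gsMul_ne_zero_imp hnu
    have := hf.1 l hl
    have := hg.1 m hm
    have : nu.re = l.re + m.re := by rw [← he, Complex.add_re]
    linarith
  · intro N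
    apply Set.Finite.subset (((hf.2 (N - b)).prod (hg.2 (N - a))).image
      (fun q : ℂ × ℂ => q.1 + q.2))
    rintro nu ⟨hnu, hre⟩
    obtain ⟨l, m, hl, hm, he⟩ := gsMul_ne_zero_imp hnu
    have hla := hf.1 l hl
    have hmb := hg.1 m hm
    have hsum : l.re + m.re < N := by
      rw [← Complex.add_re, he]; exact hre
    exact ⟨(l, m), ⟨⟨hl, by linarith⟩, ⟨hm, by linarith⟩⟩, he⟩

lemma goodGE_pow {c : ℝ} {f : RawGS} (hf : GoodGE c f) (hc : 0 ≤ c) (k : ℕ) :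
    GoodGE ((k : ℝ) * c) (gsPow f k) := by
  induction k with
  | zero => simpa [gsPow] using goodGE_one
  | succ k ih =>
      have h := goodGE_mul hf ih
      have he : ((k + 1 : ℕ) : ℝ) * c = c + (k : ℝ) * c := by push_cast; ring
      rw [he]
      exact h

lemma goodGE_prod_ofFn {m : ℕ} (g : Fin m → RawGS) (d : Fin m → ℝ)
    (h : ∀ j, GoodGE (d j) (g j)) : GoodGE (∑ j, d j) (gsProdList (List.ofFn g)) := by
  induction m with
  | zero => simpa [gsProdList] using goodGE_one
  | succ m ih =>
      rw [List.ofFn_succ, Fin.sum_univ_succ]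
      exact goodGE_mul (h 0) (ih _ _ (fun j => h j.succ))

lemma goodGE_delta {c : ℝ} {f : RawGS} (hf : GoodGE c f) : GoodGE c (gsDelta f) := by
  have hsub : ∀ lam : ℂ, gsDelta f lam ≠ 0 → f lam ≠ 0 := by
    intro lam h h0; exact h (by simp [gsDelta, h0])
  exact ⟨fun lam h => hf.1 lam (hsub lam h),
    fun N => (hf.2 N).subset (fun lam ⟨h1, h2⟩ => ⟨hsub lam h1, h2⟩)⟩

lemma goodGE_sigma {c : ℝ} {lnq : ℂ} {f : RawGS} (hf : GoodGE c f) :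
    GoodGE c (gsSigma lnq f) := by
  have hsub : ∀ lam : ℂ, gsSigma lnq f lam ≠ 0 → f lam ≠ 0 := by
    intro lam h h0; exact h (by simp [gsSigma, h0])
  exact ⟨fun lam h => hf.1 lam (hsub lam h),
    fun N => (hf.2 N).subset (fun lam ⟨h1, h2⟩ => ⟨hsub lam h1, h2⟩)⟩

lemma div_natCast_re (lam : ℂ) (l : ℕ) : (lam / (l : ℂ)).re = lam.re / (l : ℝ) := by
  rcases Nat.eq_zero_or_pos l with h | h
  · simp [h]
  · have : (l : ℂ) = ((l : ℝ) : ℂ) := by push_cast; ring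
    rw [this, Complex.div_ofReal_re]

lemma goodGE_mu {c : ℝ} {l : ℕ} {f : RawGS} (hc : 0 < c) (hl : 2 ≤ l)
    (hf : GoodGE c f) : GoodGE c (gsMu l f) := by
  have hl1 : (1 : ℝ) ≤ (l : ℝ) := by
    have : (1 : ℕ) ≤ l := by omega
    exact_mod_cast this
  have hl0 : (0 : ℝ) < (l : ℝ) := by linarith
  have hlne : (l : ℂ) ≠ 0 := by
    have : l ≠ 0 := by omega
    exact_mod_cast this
  have key : ∀ lam : ℂ, gsMu l f lam ≠ 0 → c ≤ lam.re / (l : ℝ) ∧ 0 < lam.re := by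
    intro lam h
    have h1 : c ≤ lam.re / (l : ℝ) := by rw [← div_natCast_re]; exact hf.1 _ h
    have hpos : 0 < lam.re := by
      rcases div_pos_iff.mp (hc.trans_le h1) with ⟨h', _⟩ | ⟨_, h'⟩
      · exact h'
      · linarith
    exact ⟨h1, hpos⟩
  constructor
  · intro lam h
    obtain ⟨h1, hpos⟩ := key lam h
    calc c ≤ lam.re / (l : ℝ) := h1
      _ ≤ lam.re := by rw [div_le_iff₀ hl0]; nlinarith
  · intro N
    apply Set.Finite.subset ((hf.2 N).image (fun m : ℂ => m * (l : ℂ)))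
    rintro lam ⟨h1, h2⟩
    obtain ⟨_, hpos⟩ := key lam h1
    refine ⟨lam / (l : ℂ), ⟨h1, ?_⟩, div_mul_cancel₀ lam hlne⟩
    rw [div_natCast_re]
    calc lam.re / (l : ℝ) ≤ lam.re := by rw [div_le_iff₀ hl0]; nlinarith
      _ < N := h2

lemma isGen_exists_goodGE {φ : RawGS} (hφ : IsGen φ) : ∃ c : ℝ, 0 < c ∧ GoodGE c φ := by
  classical
  have hS : {lam : ℂ | φ lam ≠ 0 ∧ lam.re < 1}.Finite := hφ.2 1
  have hT : (insert (1 : ℝ) (Complex.re '' {lam : ℂ | φ lam ≠ 0 ∧ lam.re < 1})).Finite :=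
    (hS.image _).insert 1
  have hne : hT.toFinset.Nonempty := ⟨1, by simp⟩
  set c := hT.toFinset.min' hne with hcdef
  have hmem : ∀ x ∈ hT.toFinset, 0 < x := by
    intro x hx
    rw [Set.Finite.mem_toFinset] at hx
    rcases hx with h1 | ⟨lam, ⟨hl, _⟩, hre⟩
    · rw [h1]; norm_num
    · rw [← hre]; exact hφ.1 lam hl
  refine ⟨c, hmem _ (hT.toFinset.min'_mem hne), ?_, hφ.2⟩
  intro lam hl
  by_cases h1 : lam.re < 1
  · exact hT.toFinset.min'_le _ (by rw [Set.Finite.mem_toFinset]; exact Or.inr ⟨lam, ⟨hl, h1⟩, rfl⟩)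
  · have : c ≤ 1 := hT.toFinset.min'_le _ (by rw [Set.Finite.mem_toFinset]; exact Or.inl rfl)
    linarith

/-- **Lemma 1.**  If `F(x, y₀, …, yₙ)` is holomorphic near the origin of `ℂ^{n+2}`,
`φ ∈ 𝒢` is a generalized power series and `Δ` is one of the operators `δ`, `σ`, `μ`,
then the formal substitution `F(x, φ, Δφ, …, Δⁿφ)` is a well-defined generalized power
series: for every `N > 0` only finitely many exponents occurring in the substituted
series have real part less than `N`. -/
theorem lemma1_substitution_well_defined {n : ℕ}
    (A : ℕ → (Fin (n + 1) →₀ ℕ) → ℂ) (hA : MvRadiusPos A)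
    (φ : RawGS) (hφ : IsGen φ)
    (Δ : RawGS → RawGS)
    (hΔ : Δ = gsDelta ∨
      (∃ lnq : ℂ, Complex.exp lnq ≠ 1 ∧ Δ = gsSigma lnq) ∨
      (∃ l : ℕ, 2 ≤ l ∧ Δ = gsMu l)) :
    ∀ N : ℝ, 0 < N →
      {lam : ℂ | gsSubst A (fun j => Δ^[(j : ℕ)] φ) lam ≠ 0 ∧ lam.re < N}.Finite := by
  classical
  obtain ⟨c, hc, hgood⟩ := isGen_exists_goodGE hφ
  -- `Δ` preserves `GoodGE c`
  have hpres : ∀ f : RawGS, GoodGE c f → GoodGE c (Δ f) := by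
    rcases hΔ with h | ⟨lnq, _, h⟩ | ⟨l, hl, h⟩
    · intro f hf; rw [h]; exact goodGE_delta hf
    · intro f hf; rw [h]; exact goodGE_sigma hf
    · intro f hf; rw [h]; exact goodGE_mu hc hl hf
  have hiter : ∀ j : ℕ, GoodGE c (Δ^[j] φ) := by
    intro j
    induction j with
    | zero => simpa using hgood
    | succ j ih => rw [Function.iterate_succ_apply']; exact hpres _ ih
  set Φ : Fin (n + 1) → RawGS := fun j => Δ^[(j : ℕ)] φ with hΦ
  -- product series with exponent-degree bound
  have hprod : ∀ p : Fin (n + 1) →₀ ℕ,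
      GoodGE (∑ j, (p j : ℝ) * c) (gsProdList (List.ofFn fun j => gsPow (Φ j) (p j))) := by
    intro p
    exact goodGE_prod_ofFn _ _ (fun j => goodGE_pow (hiter j) hc.le (p j))
  intro N hN
  set K : ℕ := ⌈N⌉₊ with hK
  set M : ℕ := ⌈N / c⌉₊ with hM
  set P : Fin (n + 1) →₀ ℕ := Finsupp.equivFunOnFinite.symm (fun _ => M) with hP
  have hPj : ∀ j, P j = M := fun j => rfl
  -- the finite covering set
  apply Set.Finite.subset
    (Set.Finite.biUnion (Finset.range K).finite_toSet (fun k _ =>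
      Set.Finite.biUnion (Finset.Iic P).finite_toSet (fun p _ =>
        (((hprod p).2 N).image (fun lam : ℂ => lam + (k : ℂ))))))
  rintro nu ⟨hnu, hre⟩
  -- extract a nonzero term
  obtain ⟨k, hk⟩ := finsum_ne_zero_imp hnu
  obtain ⟨p, hp⟩ := finsum_ne_zero_imp hk
  have hprodne : gsProdList (List.ofFn fun j => gsPow (Φ j) (p j)) (nu - (k : ℂ)) ≠ 0 :=
    fun h0 => hp (by rw [h0, mul_zero])
  have hdeg : (∑ j, (p j : ℝ) * c) ≤ (nu - (k : ℂ)).re := (hprod p).1 _ hprodne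
  have hsubre : (nu - (k : ℂ)).re = nu.re - (k : ℝ) := by
    simp [Complex.sub_re]
  rw [hsubre] at hdeg
  have hdegnn : (0 : ℝ) ≤ ∑ j, (p j : ℝ) * c :=
    Finset.sum_nonneg (fun j _ => mul_nonneg (Nat.cast_nonneg _) hc.le)
  have hkN : (k : ℝ) < N := by linarith
  have hkK : k ∈ Finset.range K := by
    rw [Finset.mem_range, hK]
    exact_mod_cast (Nat.lt_ceil).2 hkN
  have hpP : p ∈ Finset.Iic P := by
    rw [Finset.mem_Iic]
    intro j
    rw [hPj j]
    have hterm : (p j : ℝ) * c ≤ ∑ i, (p i : ℝ) * c :=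
      Finset.single_le_sum (f := fun i => (p i : ℝ) * c)
        (fun i _ => mul_nonneg (Nat.cast_nonneg _) hc.le) (Finset.mem_univ j)
    have : (p j : ℝ) * c < N := by linarith
    have hj : (p j : ℝ) < N / c := (lt_div_iff₀ hc).2 this
    exact le_of_lt ((Nat.lt_ceil).2 hj)
  refine Set.mem_biUnion hkK (Set.mem_biUnion hpP ?_)
  refine ⟨nu - (k : ℂ), ⟨hprodne, ?_⟩, by ring⟩
  rw [hsubre]
  have : (0 : ℝ) ≤ (k : ℝ) := Nat.cast_nonneg _
  linarith
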